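/- Let c = 1/√2 and d < √2/2 with d ≥ 1 - c. Then the identity a(a(a(n) + a(n-1))) = a(n), where a(n) = ⌊cn + d⌋, fails for infinitely many n ≥ 2. -/

import Mathlib

open Real

def pellP : ℕ → ℤ × ℤ
  | 0 => (1, 1)
  | k + 1 => (3 * (pellP k).1 + 4 * (pellP k).2, 2 * (pellP k).1 + 3 * (pellP k).2)

lemma pellP_prop : ∀ k : ℕ, (pellP k).1 ^ 2 + 1 = 2 * (pellP k).2 ^ 2 ∧
    1 ≤ (pellP k).2 ∧ (k : ℤ) + 1 ≤ (pellP k).1 := by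
  intro k
  induction k with
  | zero => simp [pellP]
  | succ k ih =>
    obtain ⟨h1, h2, h3⟩ := ih
    refine ⟨?_, ?_, ?_⟩
    · simp only [pellP]; push_cast; nlinarith
    · simp only [pellP]; nlinarith
    · simp only [pellP]; push_cast; nlinarith

lemma small_step (ε : ℝ) (hε : 0 < ε) :
    ∃ m : ℤ, 1 ≤ m ∧ 0 < Int.fract ((1 / Real.sqrt 2) * m) ∧
      Int.fract ((1 / Real.sqrt 2) * m) < ε := by
  have h2 : Real.sqrt 2 * Real.sqrt 2 = 2 := Real.mul_self_sqrt (by norm_num)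
  have hs2 : (0:ℝ) < Real.sqrt 2 := Real.sqrt_pos.2 (by norm_num)
  set k : ℕ := ⌈1 / ε⌉₊ with hk
  obtain ⟨h1, hy, hx⟩ := pellP_prop k
  set x : ℤ := (pellP k).1
  set y : ℤ := (pellP k).2
  have hkε : (1 / ε : ℝ) ≤ (k : ℝ) := Nat.le_ceil _
  have hr1 : (x:ℝ)^2 + 1 = 2*(y:ℝ)^2 := by exact_mod_cast congrArg (fun z : ℤ => (z:ℝ)) h1
  have hxr : (1:ℝ) ≤ (x:ℝ) := by exact_mod_cast by omega
  have hxr' : ((k:ℝ) + 1) ≤ (x:ℝ) := by exact_mod_cast hx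
  have hyr : (1:ℝ) ≤ (y:ℝ) := by exact_mod_cast hy
  have hval : (1 / Real.sqrt 2) * ((2*y : ℤ) : ℝ) = (y:ℝ) * Real.sqrt 2 := by
    push_cast
    field_simp
    linear_combination -h2
  have e : ((y:ℝ)*Real.sqrt 2 - x) * ((y:ℝ)*Real.sqrt 2 + x) = 1 := by nlinarith [h2, hr1]
  have hS : (0:ℝ) < (y:ℝ)*Real.sqrt 2 + x := by nlinarith
  have efrac : (y:ℝ)*Real.sqrt 2 - (x:ℝ) = 1 / ((y:ℝ)*Real.sqrt 2 + x) := by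
    field_simp
    linarith [e]
  have hfpos : 0 < (y:ℝ)*Real.sqrt 2 - x := by
    rw [efrac]; positivity
  have hflt : (y:ℝ)*Real.sqrt 2 - x < ε := by
    rw [efrac, div_lt_iff₀ hS]
    have haux : ε * (1/ε) = 1 := by field_simp
    have hεx : 1/ε + 1 ≤ (x:ℝ) := by linarith
    nlinarith [mul_le_mul_of_nonneg_left hεx hε.le,
      mul_pos (mul_pos (lt_of_lt_of_le zero_lt_one hyr) hs2) hε]
  have hf1 : (y:ℝ)*Real.sqrt 2 - x < 1 := by
    rw [efrac]
    rw [div_lt_one hS]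
    nlinarith
  have hfr : Int.fract ((1 / Real.sqrt 2) * ((2*y : ℤ) : ℝ)) = (y:ℝ)*Real.sqrt 2 - x := by
    rw [hval]
    have : (y:ℝ)*Real.sqrt 2 = ((y:ℝ)*Real.sqrt 2 - x) + (x : ℤ) := by push_cast; ring
    conv_lhs => rw [this]
    rw [Int.fract_add_intCast, Int.fract_eq_self.2 ⟨le_of_lt hfpos, hf1⟩]
  exact ⟨2*y, by omega, by rw [hfr]; exact hfpos, by rw [hfr]; exact hflt⟩

lemma fails_lemma (c d : ℝ) (hc : c = 1 / Real.sqrt 2) (hd1 : 1 - c ≤ d) (hdc : d < c)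
    (a : ℤ → ℤ) (ha : ∀ n : ℤ, a n = ⌊c * n + d⌋) (n : ℤ)
    (hθ1 : c - (1 + c - d - 2*c*d)/(2*c) < Int.fract (c*n + d))
    (hθ2 : Int.fract (c*n + d) < c) :
    a (a (a n + a (n - 1))) ≠ a n := by
  have h2 : Real.sqrt 2 * Real.sqrt 2 = 2 := Real.mul_self_sqrt (by norm_num)
  have hs2 : (0:ℝ) < Real.sqrt 2 := Real.sqrt_pos.2 (by norm_num)
  have hcpos : 0 < c := by rw [hc]; positivity
  have hcc : c * c = 1/2 := by rw [hc]; field_simp; rw [sq_sqrt (by norm_num : (0:ℝ) ≤ 2)]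
  have hc1 : c < 1 := by
    rw [hc, div_lt_one hs2]; nlinarith
  set θ := Int.fract (c*n + d) with hθdef
  have hθ0 : 0 ≤ θ := Int.fract_nonneg _
  have han : (a n : ℝ) = c*n + d - θ := by
    rw [ha n]
    have := Int.self_sub_fract (c*n + d)
    rw [← hθdef] at this
    linarith [this]
  have han1 : a (n - 1) = a n - 1 := by
    rw [ha (n-1)]
    rw [Int.floor_eq_iff]
    constructor
    · push_cast
      nlinarith [han]
    · push_cast
      nlinarith [han]
  have hE1 : 2*c*θ < 1 := by nlinarith
  have hE2 : d + 2*c*d - c < 2*c*θ := by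
    have hne : (2*c) ≠ 0 := by positivity
    have := mul_lt_mul_of_pos_left hθ1 (by positivity : (0:ℝ) < 2*c)
    rw [mul_sub, mul_div_cancel₀ _ hne] at this
    nlinarith [this]
  have key : a (a n + a (n - 1)) = n - 1 := by
    rw [ha]
    rw [Int.floor_eq_iff]
    have hcast : ((a n + a (n - 1) : ℤ) : ℝ) = 2*(c*n + d - θ) - 1 := by
      push_cast [han1]
      push_cast at han
      linarith [han]
    rw [hcast]
    have hn2 : c*c*(n:ℝ) = (1/2)*(n:ℝ) := by rw [hcc]
    constructor
    · push_cast; nlinarith [hn2, hE1, hE2]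
    · push_cast; nlinarith [hn2, hE1, hE2]
  rw [key, han1]
  omega


lemma dens_lemma (c d : ℝ) (hc : c = 1 / Real.sqrt 2) (ε : ℝ) (hε : 0 < ε) (hε2 : ε < 1/2)
    (N : ℤ) : ∃ n : ℤ, N ≤ n ∧ c - ε < Int.fract (c*n + d) ∧ Int.fract (c*n + d) < c := by
  have h2 : Real.sqrt 2 * Real.sqrt 2 = 2 := Real.mul_self_sqrt (by norm_num)
  have hs2 : (0:ℝ) < Real.sqrt 2 := Real.sqrt_pos.2 (by norm_num)
  have hcpos : 0 < c := by rw [hc]; positivity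
  have hcc : c * c = 1/2 := by rw [hc]; field_simp; rw [sq_sqrt (by norm_num : (0:ℝ) ≤ 2)]
  have hc1 : c < 1 := by rw [hc, div_lt_one hs2]; nlinarith
  have hc12 : 1/2 < c := by nlinarith
  obtain ⟨m, hm1, ht0, htε⟩ := small_step (ε/2) (by linarith)
  rw [← hc] at ht0 htε
  set t := Int.fract (c * m) with htdef
  set x₀ := Int.fract (c * N + d) with hx₀def
  have hx₀0 : 0 ≤ x₀ := Int.fract_nonneg _
  have hx₀1 : x₀ < 1 := Int.fract_lt_one _
  set y : ℝ := if x₀ < c - ε/2 then c - ε/2 else 1 + c - ε/2 with hydef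
  have hy1 : x₀ < y := by
    rw [hydef]; split
    · assumption
    · linarith
  have hy2 : y = c - ε/2 ∨ y = 1 + c - ε/2 := by
    rw [hydef]; split
    · left; rfl
    · right; rfl
  set k : ℤ := ⌊(y - x₀)/t⌋ + 1 with hkdef
  have hk1 : 1 ≤ k := by
    have : 0 ≤ ⌊(y - x₀)/t⌋ := Int.floor_nonneg.2 (div_nonneg (by linarith) ht0.le)
    omega
  have hklow : y - x₀ < k * t := by
    have h := Int.lt_floor_add_one ((y - x₀)/t)
    have : (y - x₀)/t < (k:ℝ) := by push_cast [hkdef]; push_cast at h; linarith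
    calc y - x₀ = ((y - x₀)/t) * t := by field_simp
    _ < (k:ℝ) * t := by exact mul_lt_mul_of_pos_right this ht0
  have hkhigh : (k:ℝ) * t ≤ y - x₀ + t := by
    have h := Int.floor_le ((y - x₀)/t)
    have hk : (k:ℝ) ≤ (y - x₀)/t + 1 := by push_cast [hkdef]; linarith
    have := mul_le_mul_of_nonneg_right hk ht0.le
    calc (k:ℝ) * t ≤ ((y - x₀)/t + 1) * t := this
    _ = y - x₀ + t := by field_simp
  have hfr2 : c - ε < Int.fract (c * ((N + k*m : ℤ):ℝ) + d) ∧
      Int.fract (c * ((N + k*m : ℤ):ℝ) + d) < c := by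
    have hfr : Int.fract (c * ((N + k*m : ℤ):ℝ) + d) = Int.fract (x₀ + k * t) := by
      have hcN : c * N + d = x₀ + (⌊c * N + d⌋ : ℤ) := by
        rw [hx₀def]; push_cast [Int.fract]; ring
      have hcm : c * m = t + (⌊c * m⌋ : ℤ) := by
        rw [htdef]; push_cast [Int.fract]; ring
      have : c * ((N + k*m : ℤ):ℝ) + d = (x₀ + (k:ℝ) * t) + ((⌊c*N+d⌋ + k * ⌊c*m⌋ : ℤ):ℝ) := by
        push_cast
        push_cast at hcN hcm
        linear_combination hcN + (k:ℝ) * hcm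
      rw [this, Int.fract_add_intCast]
    rw [hfr]
    rcases hy2 with hy | hy
    · have hin : c - ε < x₀ + k*t ∧ x₀ + k*t < c := by
        constructor <;> nlinarith [hklow, hkhigh, htε]
      rw [Int.fract_eq_self.2 ⟨by linarith [hin.1], lt_trans hin.2 hc1⟩]
      exact hin
    · have hin : 1 + (c - ε) < x₀ + k*t ∧ x₀ + k*t < 1 + c := by
        constructor <;> nlinarith [hklow, hkhigh, htε]
      have : x₀ + (k:ℝ)*t = (x₀ + k*t - 1) + ((1:ℤ):ℝ) := by push_cast; ring
      rw [this, Int.fract_add_intCast,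
        Int.fract_eq_self.2 ⟨by linarith [hin.1], by linarith [hin.2]⟩]
      constructor
      · linarith [hin.1]
      · linarith [hin.2]
  exact ⟨N + k * m, by nlinarith [hk1, hm1], hfr2.1, hfr2.2⟩

theorem stmt14 (c d : ℝ) (hc : c = 1 / Real.sqrt 2)
    (hd1 : 1 - c ≤ d) (hd2 : d < Real.sqrt 2 / 2)
    (a : ℤ → ℤ) (ha : ∀ n : ℤ, a n = ⌊c * n + d⌋) :
    {n : ℤ | 2 ≤ n ∧ a (a (a n + a (n - 1))) ≠ a n}.Infinite := by
  have h2 : Real.sqrt 2 * Real.sqrt 2 = 2 := Real.mul_self_sqrt (by norm_num)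
  have hs2 : (0:ℝ) < Real.sqrt 2 := Real.sqrt_pos.2 (by norm_num)
  have hcpos : 0 < c := by rw [hc]; positivity
  have hcc : c * c = 1/2 := by rw [hc]; field_simp; rw [sq_sqrt (by norm_num : (0:ℝ) ≤ 2)]
  have hdc : d < c := by
    have : Real.sqrt 2 / 2 = 1 / Real.sqrt 2 := by
      rw [div_eq_div_iff (by norm_num) hs2.ne']
      linarith
    rw [hc, ← this]
    exact hd2
  set ε₀ : ℝ := (1 + c - d - 2*c*d)/(2*c) with hε₀def
  have hε₀pos : 0 < ε₀ := by
    apply div_pos _ (by positivity)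
    nlinarith
  set ε : ℝ := min ε₀ (1/4) with hεdef
  have hεpos : 0 < ε := lt_min hε₀pos (by norm_num)
  have hε2 : ε < 1/2 := lt_of_le_of_lt (min_le_right _ _) (by norm_num)
  apply Set.infinite_of_not_bddAbove
  rintro ⟨B, hB⟩
  obtain ⟨n, hn1, hn2, hn3⟩ := dens_lemma c d hc ε hεpos hε2 (max (B+1) 2)
  have hnS : n ∈ {n : ℤ | 2 ≤ n ∧ a (a (a n + a (n - 1))) ≠ a n} := by
    constructor
    · exact le_trans (le_max_right _ _) hn1
    · apply fails_lemma c d hc hd1 hdc a ha n _ hn3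
      calc c - ε₀ ≤ c - ε := by linarith [min_le_left ε₀ (1/4)]
      _ < Int.fract (c*n + d) := hn2
  have : n ≤ B := hB hnS
  have : max (B+1) 2 ≤ n := hn1
  omega
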